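/- Let ρ̃ ≥ 0 and suppose c := Σ_{j∈S^c} e_j < 1. If z ∈ E is any vector satisfying ‖z − ȳ‖² ≤ ρ̃·Σ_{j∈S} e_j ‖y_j − ȳ‖², then ‖z − λ̄‖² ≤ (ρ̃ + c/(1−c))·Σ_{j∈S} e_j ‖λ_j − λ̄‖². -/

import Mathlib

/-- The clipping operator `clip_C(v) = min(1, C/‖v‖)·v` (with `clip_C(0) = 0`,
since in Lean `C/0 = 0`). -/
noncomputable def clip {E : Type*} [NormedAddCommGroup E] [InnerProductSpace ℝ E]
    (C : ℝ) (v : E) : E := min 1 (C / ‖v‖) • v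

open scoped RealInnerProductSpace

section AuxLemmas

variable {E : Type*} [NormedAddCommGroup E] [InnerProductSpace ℝ E]

lemma clip_eq_self {C : ℝ} {v : E} (h : ‖v‖ ≤ C) : clip C v = v := by
  rcases eq_or_ne v 0 with rfl | hv
  · simp [clip]
  · have hv' : 0 < ‖v‖ := norm_pos_iff.2 hv
    have : (1 : ℝ) ≤ C / ‖v‖ := (one_le_div hv').2 h
    simp [clip, min_eq_left this]

lemma norm_clip_le_C {C : ℝ} (hC : 0 ≤ C) (v : E) : ‖clip C v‖ ≤ C := by
  rcases eq_or_ne v 0 with rfl | hv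
  · simpa [clip] using hC
  · have hv' : 0 < ‖v‖ := norm_pos_iff.2 hv
    have h0 : (0:ℝ) ≤ min 1 (C / ‖v‖) := le_min one_pos.le (div_nonneg hC hv'.le)
    rw [clip, norm_smul, Real.norm_of_nonneg h0]
    calc min 1 (C / ‖v‖) * ‖v‖ ≤ (C / ‖v‖) * ‖v‖ :=
          mul_le_mul_of_nonneg_right (min_le_right _ _) hv'.le
      _ = C := div_mul_cancel₀ _ hv'.ne'

lemma clip_inner_nonneg {C : ℝ} (hC : 0 ≤ C) (v : E) {w : E} (hw : ‖w‖ ≤ C) :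
    0 ≤ ⟪v - clip C v, clip C v - w⟫ := by
  by_cases h : ‖v‖ ≤ C
  · rw [clip_eq_self h]; simp
  · push_neg at h
    have hv' : 0 < ‖v‖ := hC.trans_lt h
    have hmin : min 1 (C / ‖v‖) = C / ‖v‖ :=
      min_eq_right ((div_le_one hv').2 h.le)
    have hclip : clip C v = (C / ‖v‖) • v := by rw [clip, hmin]
    have h1 : v - clip C v = (1 - C / ‖v‖) • v := by
      rw [hclip, sub_smul, one_smul]
    have hco : 0 ≤ 1 - C / ‖v‖ := by
      have : C / ‖v‖ ≤ 1 := (div_le_one hv').2 h.le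
      linarith
    rw [h1, real_inner_smul_left]
    have hin : 0 ≤ ⟪v, clip C v - w⟫ := by
      rw [hclip, inner_sub_right, real_inner_smul_right, real_inner_self_eq_norm_sq]
      have hvw : ⟪v, w⟫ ≤ ‖v‖ * ‖w‖ := real_inner_le_norm v w
      have : C / ‖v‖ * ‖v‖ ^ 2 = C * ‖v‖ := by
        field_simp
      rw [this]
      nlinarith [hv'.le]
    exact mul_nonneg hco hin

lemma clip_sq_add {C : ℝ} (hC : 0 ≤ C) (v : E) {w : E} (hw : ‖w‖ ≤ C) :
    ‖clip C v - w‖ ^ 2 + ‖v - clip C v‖ ^ 2 ≤ ‖v - w‖ ^ 2 := by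
  have hd : v - w = (v - clip C v) + (clip C v - w) := by abel
  rw [hd, norm_add_sq_real]
  nlinarith [clip_inner_nonneg hC v hw]

lemma sum_weighted_dist_sq {ι : Type*} (S : Finset ι) (e : ι → ℝ)
    (hsum : ∑ j ∈ S, e j = 1) (x : ι → E) (w : E) :
    ∑ j ∈ S, e j * ‖x j - w‖ ^ 2
      = ∑ j ∈ S, e j * ‖x j - ∑ k ∈ S, e k • x k‖ ^ 2
        + ‖(∑ k ∈ S, e k • x k) - w‖ ^ 2 := by
  set μ := ∑ k ∈ S, e k • x k with hμ
  have hzero : ∑ j ∈ S, e j • (x j - μ) = 0 := by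
    simp only [smul_sub, Finset.sum_sub_distrib, ← Finset.sum_smul, hsum, one_smul]
    exact sub_self μ
  have hexp : ∀ j, ‖x j - w‖ ^ 2
      = ‖x j - μ‖ ^ 2 + 2 * ⟪x j - μ, μ - w⟫ + ‖μ - w‖ ^ 2 := by
    intro j
    have hd : x j - w = (x j - μ) + (μ - w) := by abel
    rw [hd, norm_add_sq_real]
  calc ∑ j ∈ S, e j * ‖x j - w‖ ^ 2
      = ∑ j ∈ S, (e j * ‖x j - μ‖ ^ 2 + e j * (2 * ⟪x j - μ, μ - w⟫)
          + e j * ‖μ - w‖ ^ 2) := by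
        refine Finset.sum_congr rfl fun j hj => ?_
        rw [hexp j]; ring
    _ = ∑ j ∈ S, e j * ‖x j - μ‖ ^ 2
          + 2 * ⟪∑ j ∈ S, e j • (x j - μ), μ - w⟫
          + (∑ j ∈ S, e j) * ‖μ - w‖ ^ 2 := by
        rw [Finset.sum_add_distrib, Finset.sum_add_distrib, sum_inner, ← Finset.sum_mul]
        congr 1
        congr 1
        rw [Finset.mul_sum]
        refine Finset.sum_congr rfl fun j hj => ?_
        rw [real_inner_smul_left]; ring
    _ = ∑ j ∈ S, e j * ‖x j - μ‖ ^ 2 + ‖μ - w‖ ^ 2 := by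
        rw [hzero, hsum]
        simp

end AuxLemmas

/-- **Composing a robust aggregation rule satisfying Property 1 (contraction
constant ρ̃) with adaptive robust clipping yields Property 1 with contraction
constant ρ̃ + c/(1−c) (Lemma on AGG∘ARC).** -/
theorem agg_arc_contraction
    {E : Type*} [NormedAddCommGroup E] [InnerProductSpace ℝ E]
    {ι : Type*} [DecidableEq ι] (S : Finset ι) (hS : S.Nonempty)
    (e : ι → ℝ) (he : ∀ j ∈ S, 0 ≤ e j) (hsum : ∑ j ∈ S, e j = 1)
    (lam : ι → E) (C : ℝ) (hC : 0 ≤ C)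
    (ρt : ℝ) (hρt : 0 ≤ ρt)
    (hc : ∑ j ∈ S.filter (fun j => C < ‖lam j‖), e j < 1)
    (z : E)
    (hz : ‖z - ∑ j ∈ S, e j • clip C (lam j)‖ ^ 2
        ≤ ρt * ∑ j ∈ S, e j * ‖clip C (lam j) - ∑ k ∈ S, e k • clip C (lam k)‖ ^ 2) :
    ‖z - ∑ j ∈ S, e j • lam j‖ ^ 2
      ≤ (ρt + (∑ j ∈ S.filter (fun j => C < ‖lam j‖), e j)
            / (1 - ∑ j ∈ S.filter (fun j => C < ‖lam j‖), e j))
        * ∑ j ∈ S, e j * ‖lam j - ∑ k ∈ S, e k • lam k‖ ^ 2 := by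
  classical
  set Sc : Finset ι := S.filter (fun j => C < ‖lam j‖) with hScdef
  set c : ℝ := ∑ j ∈ Sc, e j with hcdef
  set lb : E := ∑ k ∈ S, e k • lam k with hlbdef
  set yb : E := ∑ k ∈ S, e k • clip C (lam k) with hybdef
  set V : ℝ := ∑ j ∈ S, e j * ‖lam j - lb‖ ^ 2 with hVdef
  set Vy : ℝ := ∑ j ∈ S, e j * ‖clip C (lam j) - yb‖ ^ 2 with hVydef
  set D : ℝ := ∑ j ∈ S, e j * ‖lam j - clip C (lam j)‖ ^ 2 with hDdef
  set T : ℝ := ∑ j ∈ S, e j * ‖lam j - yb‖ ^ 2 with hTdef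
  have hc0 : 0 ≤ c :=
    Finset.sum_nonneg fun j hj => he j (Finset.mem_of_mem_filter j hj)
  have h1c : 0 < 1 - c := sub_pos.2 hc
  have hD0 : 0 ≤ D :=
    Finset.sum_nonneg fun j hj => mul_nonneg (he j hj) (sq_nonneg _)
  have hVy0 : 0 ≤ Vy :=
    Finset.sum_nonneg fun j hj => mul_nonneg (he j hj) (sq_nonneg _)
  -- the clipped average lies in the ball of radius C
  have hybC : ‖yb‖ ≤ C := by
    refine (norm_sum_le _ _).trans ?_
    calc ∑ j ∈ S, ‖e j • clip C (lam j)‖ ≤ ∑ j ∈ S, e j * C := by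
          refine Finset.sum_le_sum fun j hj => ?_
          rw [norm_smul, Real.norm_of_nonneg (he j hj)]
          exact mul_le_mul_of_nonneg_left (norm_clip_le_C hC (lam j)) (he j hj)
      _ = C := by rw [← Finset.sum_mul, hsum, one_mul]
  -- pointwise projection inequality summed: Vy + D ≤ T
  have hVyT : Vy + D ≤ T := by
    rw [hVydef, hDdef, hTdef, ← Finset.sum_add_distrib]
    refine Finset.sum_le_sum fun j hj => ?_
    rw [← mul_add]
    exact mul_le_mul_of_nonneg_left (clip_sq_add hC (lam j) hybC) (he j hj)
  have hTD : 0 ≤ T - D := le_trans hVy0 (by linarith)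
  -- bias-variance identity: T = V + ‖yb - lb‖²
  have hTV : T = V + ‖yb - lb‖ ^ 2 := by
    rw [hTdef, hVdef, hlbdef, sum_weighted_dist_sq S e hsum lam yb, norm_sub_rev]
  -- bias bound: ‖yb - lb‖² ≤ c * D
  have hsplit : yb - lb = ∑ j ∈ Sc, e j • (clip C (lam j) - lam j) := by
    rw [hybdef, hlbdef, ← Finset.sum_sub_distrib]
    simp_rw [← smul_sub]
    refine (Finset.sum_subset (Finset.filter_subset _ _) fun j hj hnj => ?_).symm
    have hle : ‖lam j‖ ≤ C :=
      le_of_not_gt fun hlt => hnj (Finset.mem_filter.2 ⟨hj, hlt⟩)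
    rw [clip_eq_self hle, sub_self, smul_zero]
  have hb : ‖yb - lb‖ ^ 2 ≤ c * D := by
    have h1 : ‖yb - lb‖ ≤ ∑ j ∈ Sc, e j * ‖lam j - clip C (lam j)‖ := by
      rw [hsplit]
      refine (norm_sum_le _ _).trans (le_of_eq ?_)
      refine Finset.sum_congr rfl fun j hj => ?_
      rw [norm_smul, Real.norm_of_nonneg (he j (Finset.mem_of_mem_filter j hj)),
        norm_sub_rev]
    have h2 : (∑ j ∈ Sc, e j * ‖lam j - clip C (lam j)‖) ^ 2
        ≤ c * ∑ j ∈ Sc, e j * ‖lam j - clip C (lam j)‖ ^ 2 := by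
      refine Finset.sum_sq_le_sum_mul_sum_of_sq_eq_mul Sc
        (fun j hj => he j (Finset.mem_of_mem_filter j hj))
        (fun j hj => mul_nonneg (he j (Finset.mem_of_mem_filter j hj)) (sq_nonneg _))
        (fun j hj => ?_)
      ring
    have h3 : ∑ j ∈ Sc, e j * ‖lam j - clip C (lam j)‖ ^ 2 ≤ D := by
      rw [hDdef]
      refine Finset.sum_le_sum_of_subset_of_nonneg (Finset.filter_subset _ _)
        fun j hj _ => mul_nonneg (he j hj) (sq_nonneg _)
    calc ‖yb - lb‖ ^ 2 ≤ (∑ j ∈ Sc, e j * ‖lam j - clip C (lam j)‖) ^ 2 :=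
          pow_le_pow_left₀ (norm_nonneg _) h1 2
      _ ≤ c * ∑ j ∈ Sc, e j * ‖lam j - clip C (lam j)‖ ^ 2 := h2
      _ ≤ c * D := mul_le_mul_of_nonneg_left h3 hc0
  -- triangle inequality
  set a : ℝ := ‖z - yb‖ with hadef
  set b : ℝ := ‖yb - lb‖ with hbdef
  have ha0 : 0 ≤ a := norm_nonneg _
  have hb0 : 0 ≤ b := norm_nonneg _
  have htri : ‖z - lb‖ ≤ a + b := by
    have hd : z - lb = (z - yb) + (yb - lb) := by abel
    rw [hd]; exact norm_add_le _ _
  have hA : ‖z - lb‖ ^ 2 ≤ a ^ 2 + 2 * a * b + b ^ 2 := by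
    calc ‖z - lb‖ ^ 2 ≤ (a + b) ^ 2 := pow_le_pow_left₀ (norm_nonneg _) htri 2
      _ = a ^ 2 + 2 * a * b + b ^ 2 := by ring
  have hza : a ^ 2 ≤ ρt * Vy := hz
  -- cross term bound
  set x1 : ℝ := ρt * (1 - c) * D with hx1def
  set x2 : ℝ := c * (T - D) / (1 - c) with hx2def
  have hx1 : 0 ≤ x1 := mul_nonneg (mul_nonneg hρt h1c.le) hD0
  have hx2 : 0 ≤ x2 := div_nonneg (mul_nonneg hc0 hTD) h1c.le
  have hcross : 2 * a * b ≤ x1 + x2 := by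
    have hsq : (2 * a * b) ^ 2 ≤ 4 * (x1 * x2) := by
      have hab : a ^ 2 * b ^ 2 ≤ (ρt * Vy) * (c * D) :=
        mul_le_mul hza hb (sq_nonneg b) (mul_nonneg hρt hVy0)
      have hab2 : (ρt * Vy) * (c * D) ≤ (ρt * (T - D)) * (c * D) := by
        have : ρt * Vy ≤ ρt * (T - D) :=
          mul_le_mul_of_nonneg_left (by linarith) hρt
        exact mul_le_mul_of_nonneg_right this (mul_nonneg hc0 hD0)
      have hx1x2 : x1 * x2 = (ρt * (T - D)) * (c * D) := by
        rw [hx1def, hx2def]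
        field_simp
      calc (2 * a * b) ^ 2 = 4 * (a ^ 2 * b ^ 2) := by ring
        _ ≤ 4 * ((ρt * Vy) * (c * D)) := by linarith
        _ ≤ 4 * ((ρt * (T - D)) * (c * D)) := by linarith
        _ = 4 * (x1 * x2) := by rw [hx1x2]
    have h2ab : 0 ≤ 2 * a * b := by positivity
    have hx12 : 0 ≤ x1 + x2 := add_nonneg hx1 hx2
    have hsq2 : (2 * a * b) ^ 2 ≤ (x1 + x2) ^ 2 := by nlinarith [sq_nonneg (x1 - x2)]
    calc 2 * a * b = Real.sqrt ((2 * a * b) ^ 2) := (Real.sqrt_sq h2ab).symm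
      _ ≤ Real.sqrt ((x1 + x2) ^ 2) := Real.sqrt_le_sqrt hsq2
      _ = x1 + x2 := Real.sqrt_sq hx12
  -- final algebra
  have hTcD : T - c * D ≤ V := by
    have := hTV
    linarith
  have hfin : ρt * Vy + x1 + x2 + c * D ≤ (ρt + c / (1 - c)) * V := by
    rw [← mul_le_mul_iff_right₀ h1c]
    have e1 : (1 - c) * (ρt * Vy + x1 + x2 + c * D)
        = (1 - c) * (ρt * Vy) + (1 - c) * (ρt * (1 - c) * D)
          + c * (T - D) + (1 - c) * (c * D) := by
      rw [hx1def, hx2def]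
      field_simp
    have e2 : (1 - c) * ((ρt + c / (1 - c)) * V) = (1 - c) * (ρt * V) + c * V := by
      field_simp
    rw [e1, e2]
    have k1 : (1 - c) * (ρt * Vy) ≤ (1 - c) * (ρt * (T - D)) :=
      mul_le_mul_of_nonneg_left
        (mul_le_mul_of_nonneg_left (by linarith) hρt) h1c.le
    have k2 : (1 - c) * (ρt * (T - c * D)) ≤ (1 - c) * (ρt * V) :=
      mul_le_mul_of_nonneg_left (mul_le_mul_of_nonneg_left hTcD hρt) h1c.le
    have k3 : c * (T - c * D) ≤ c * V := mul_le_mul_of_nonneg_left hTcD hc0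
    linarith [k1, k2, k3, hx1def]
  calc ‖z - lb‖ ^ 2 ≤ a ^ 2 + 2 * a * b + b ^ 2 := hA
    _ ≤ ρt * Vy + (x1 + x2) + c * D := by
        have hbb : b ^ 2 ≤ c * D := hb
        linarith
    _ ≤ (ρt + c / (1 - c)) * V := by linarith [hfin]
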